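/- For k ∈ ℕ, k ≥ 3, and a ≠ 0, the function ξ(x) = (a² + sinh²x)^{−1/2} with λ = a²(2−k) satisfies the Jacobi equation ξ'' − (k−2) tanh(x) ξ' + (1−a²)·tanh(x)/(a²+sinh²x)·ξ' + (1−a²)(a²−sinh²x)/(a²+sinh²x)²·ξ + (k−1)(a²−sinh²x)/(a²+sinh²x)·ξ + λ·ξ/(cosh²x·(a² sech²x + tanh²x)) = 0 on all of ℝ. -/

import Mathlib

/-- ξ(x) = 1/√(a²+sinh²x) with λ = a²(2−k) solves the Jacobi equation at the
identity self-map of the ellipsoid E_a, for k ≥ 3 and a ≠ 0. -/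
theorem stmt13 (k : ℕ) (hk : 3 ≤ k) (a : ℝ) (ha : a ≠ 0) :
    ∀ x : ℝ,
      deriv (deriv (fun y : ℝ => 1 / Real.sqrt (a ^ 2 + Real.sinh y ^ 2))) x
      - ((k : ℝ) - 2) * Real.tanh x
          * deriv (fun y : ℝ => 1 / Real.sqrt (a ^ 2 + Real.sinh y ^ 2)) x
      + (1 - a ^ 2) * Real.tanh x / (a ^ 2 + Real.sinh x ^ 2)
          * deriv (fun y : ℝ => 1 / Real.sqrt (a ^ 2 + Real.sinh y ^ 2)) x
      + (1 - a ^ 2) * (a ^ 2 - Real.sinh x ^ 2) / (a ^ 2 + Real.sinh x ^ 2) ^ 2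
          * (1 / Real.sqrt (a ^ 2 + Real.sinh x ^ 2))
      + ((k : ℝ) - 1) * (a ^ 2 - Real.sinh x ^ 2) / (a ^ 2 + Real.sinh x ^ 2)
          * (1 / Real.sqrt (a ^ 2 + Real.sinh x ^ 2))
      + (a ^ 2 * (2 - (k : ℝ))) * (1 / Real.sqrt (a ^ 2 + Real.sinh x ^ 2))
          / (Real.cosh x ^ 2 * (a ^ 2 * (1 / Real.cosh x) ^ 2 + Real.tanh x ^ 2)) = 0 := by
  intro x
  have hux : ∀ y : ℝ, (0:ℝ) < a ^ 2 + Real.sinh y ^ 2 := by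
    intro y
    have : (0:ℝ) < a ^ 2 := by positivity
    nlinarith [sq_nonneg (Real.sinh y)]
  have hc0 : Real.cosh x ≠ 0 := (Real.cosh_pos x).ne'
  -- derivative of the inner function
  have hinner : ∀ y : ℝ, HasDerivAt (fun z : ℝ => a ^ 2 + Real.sinh z ^ 2)
      (2 * Real.sinh y * Real.cosh y) y := by
    intro y
    have h := ((Real.hasDerivAt_sinh y).pow 2).const_add (a ^ 2)
    simpa [mul_comm, mul_assoc] using h
  have hsqrt : ∀ y : ℝ, HasDerivAt (fun z : ℝ => Real.sqrt (a ^ 2 + Real.sinh z ^ 2))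
      (Real.sinh y * Real.cosh y / Real.sqrt (a ^ 2 + Real.sinh y ^ 2)) y := by
    intro y
    have h := (Real.hasDerivAt_sqrt (ne_of_gt (hux y))).comp y (hinner y)
    refine HasDerivAt.congr_deriv h ?_
    have hs0 : Real.sqrt (a ^ 2 + Real.sinh y ^ 2) ≠ 0 := by
      positivity
    field_simp
  have hxi : ∀ y : ℝ, HasDerivAt (fun z : ℝ => 1 / Real.sqrt (a ^ 2 + Real.sinh z ^ 2))
      (-(Real.sinh y * Real.cosh y) / Real.sqrt (a ^ 2 + Real.sinh y ^ 2) ^ 3) y := by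
    intro y
    have hs0 : Real.sqrt (a ^ 2 + Real.sinh y ^ 2) ≠ 0 := by positivity
    have h := (hsqrt y).inv hs0
    simp only [one_div]
    refine HasDerivAt.congr_deriv h ?_
    simp only [neg_div, div_div]
    ring_nf
  -- second derivative
  have hp : HasDerivAt (fun y : ℝ => -(Real.sinh y * Real.cosh y))
      (-(Real.cosh x ^ 2 + Real.sinh x ^ 2)) x := by
    have h := ((Real.hasDerivAt_sinh x).mul (Real.hasDerivAt_cosh x)).neg
    refine HasDerivAt.congr_deriv h ?_
    ring
  have hq : HasDerivAt (fun y : ℝ => Real.sqrt (a ^ 2 + Real.sinh y ^ 2) ^ 3)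
      ((3 : ℕ) * Real.sqrt (a ^ 2 + Real.sinh x ^ 2) ^ 2
        * (Real.sinh x * Real.cosh x / Real.sqrt (a ^ 2 + Real.sinh x ^ 2))) x := by
    simpa using (hsqrt x).fun_pow 3
  have hq0 : Real.sqrt (a ^ 2 + Real.sinh x ^ 2) ^ 3 ≠ 0 := by positivity
  have hd2 := hp.fun_div hq hq0
  -- rewrite the first derivative in the goal
  have hderivfun : deriv (fun y : ℝ => 1 / Real.sqrt (a ^ 2 + Real.sinh y ^ 2))
      = fun y : ℝ => -(Real.sinh y * Real.cosh y) / Real.sqrt (a ^ 2 + Real.sinh y ^ 2) ^ 3 :=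
    funext fun y => (hxi y).deriv
  -- simplify the last denominator
  have hden : Real.cosh x ^ 2 * (a ^ 2 * (1 / Real.cosh x) ^ 2 + Real.tanh x ^ 2)
      = a ^ 2 + Real.sinh x ^ 2 := by
    rw [Real.tanh_eq_sinh_div_cosh]
    field_simp
  rw [hderivfun, hden, Real.tanh_eq_sinh_div_cosh]
  beta_reduce
  rw [hd2.deriv]
  set s := Real.sinh x with hs
  set c := Real.cosh x with hcc
  set r := Real.sqrt (a ^ 2 + s ^ 2) with hrdef
  have hr0 : r ≠ 0 := by positivity
  have hr2 : r ^ 2 = a ^ 2 + s ^ 2 := Real.sq_sqrt (hux x).le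
  have ha2 : a ^ 2 = r ^ 2 - s ^ 2 := by rw [hr2]; ring
  have hc2 : c ^ 2 = s ^ 2 + 1 := Real.cosh_sq x
  have hc4 : c ^ 4 = (s ^ 2 + 1) ^ 2 := by rw [← hc2]; ring
  rw [ha2]
  have hu0 : r ^ 2 - s ^ 2 + s ^ 2 ≠ 0 := by rw [← ha2]; exact (hux x).ne'
  field_simp
  ring_nf
  rw [hc2]
  ring
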